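/- For a closed Markov process, the relative entropy between any two positive solutions p(t), q(t) of the master equation is non-increasing: d/dt I(p(t), q(t)) ≤ 0. -/

import Mathlib

open Finset

lemma key_bracket (a b c d : ℝ) (ha : 0 < a) (hb : 0 < b) (hc : 0 < c) (hd : 0 < d) :
    c * ((Real.log a - Real.log b) - (Real.log c - Real.log d) + 1) - a * d / b ≤ 0 := by
  have hx : (0:ℝ) < a * d / (b * c) := by positivity
  have hlog := Real.log_le_sub_one_of_pos hx
  have hxeq : Real.log (a * d / (b * c))
      = (Real.log a - Real.log b) - (Real.log c - Real.log d) := by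
    rw [Real.log_div (by positivity) (by positivity), Real.log_mul ha.ne' hd.ne',
      Real.log_mul hb.ne' hc.ne']
    ring
  rw [hxeq] at hlog
  have h2 : c * ((Real.log a - Real.log b) - (Real.log c - Real.log d) + 1)
      ≤ c * (a * d / (b * c)) :=
    mul_le_mul_of_nonneg_left (by linarith) hc.le
  have h3 : c * (a * d / (b * c)) = a * d / b := by
    field_simp
  linarith [h3 ▸ h2]

/-- For a closed Markov process, the relative entropy between any two positive
solutions of the master equation is non-increasing. -/
theorem relative_entropy_nonincreasing_two_solutions {V : Type*} [Fintype V]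
    (H : V → V → ℝ)
    (hoff : ∀ i j, i ≠ j → 0 ≤ H i j)
    (hsum : ∀ j, ∑ i, H i j = 0)
    (p q : ℝ → V → ℝ)
    (hp : ∀ t i, 0 < p t i) (hq : ∀ t i, 0 < q t i)
    (hpm : ∀ t i, HasDerivAt (fun s => p s i) (∑ j, H i j * p t j) t)
    (hqm : ∀ t i, HasDerivAt (fun s => q s i) (∑ j, H i j * q t j) t)
    (t : ℝ) :
    deriv (fun s => ∑ i, p s i * Real.log (p s i / q s i)) t ≤ 0 := by
  classical
  set L : V → ℝ := fun i => Real.log (p t i) - Real.log (q t i) with hLdef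
  -- derivative of each summand
  have hder : ∀ i, HasDerivAt (fun s => p s i * Real.log (p s i / q s i))
      ((∑ j, H i j * p t j) * L i
        + p t i * ((∑ j, H i j * p t j) / p t i - (∑ j, H i j * q t j) / q t i)) t := by
    intro i
    have h1 : HasDerivAt (fun s => Real.log (p s i)) ((∑ j, H i j * p t j) / p t i) t :=
      (hpm t i).log (hp t i).ne'
    have h2 : HasDerivAt (fun s => Real.log (q s i)) ((∑ j, H i j * q t j) / q t i) t :=
      (hqm t i).log (hq t i).ne'
    have h3 := (hpm t i).mul (h1.sub h2)
    have heq : (fun s => p s i * Real.log (p s i / q s i))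
        = fun s => p s i * (Real.log (p s i) - Real.log (q s i)) := by
      funext s; rw [Real.log_div (hp s i).ne' (hq s i).ne']
    rw [heq, hLdef]; exact h3
  have hD : HasDerivAt (fun s => ∑ i, p s i * Real.log (p s i / q s i))
      (∑ i, ((∑ j, H i j * p t j) * L i
        + p t i * ((∑ j, H i j * p t j) / p t i - (∑ j, H i j * q t j) / q t i))) t :=
    HasDerivAt.fun_sum (fun i _ => hder i)
  rw [hD.deriv]
  -- rewrite each summand as a sum over j
  have hterm : ∀ i, (∑ j, H i j * p t j) * L i
      + p t i * ((∑ j, H i j * p t j) / p t i - (∑ j, H i j * q t j) / q t i)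
      = ∑ j, (H i j * (p t j * (L i + 1)) - H i j * (p t i * q t j / q t i)) := by
    intro i
    have hpne := (hp t i).ne'
    have hqne := (hq t i).ne'
    rw [Finset.sum_sub_distrib]
    have e1 : ∑ j, H i j * (p t j * (L i + 1)) = (∑ j, H i j * p t j) * (L i + 1) := by
      rw [Finset.sum_mul]; congr 1; funext j; ring
    have e2 : ∑ j, H i j * (p t i * q t j / q t i)
        = p t i * (∑ j, H i j * q t j) / q t i := by
      rw [Finset.mul_sum, Finset.sum_div]; congr 1; funext j; ring
    rw [e1, e2]
    field_simp
    ring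
  rw [Finset.sum_congr rfl (fun i _ => hterm i)]
  -- subtract the zero quantity ∑ i ∑ j H i j * (p t j * L j)
  have hzero : ∑ i, ∑ j, H i j * (p t j * L j) = 0 := by
    rw [Finset.sum_comm]
    apply Finset.sum_eq_zero
    intro j _
    rw [← Finset.sum_mul, hsum j, zero_mul]
  have hsplit : ∑ i, ∑ j, (H i j * (p t j * (L i + 1)) - H i j * (p t i * q t j / q t i))
      = ∑ i, ∑ j, (H i j * (p t j * (L i - L j + 1)) - H i j * (p t i * q t j / q t i)) := by
    have : ∑ i, ∑ j, (H i j * (p t j * (L i + 1)) - H i j * (p t i * q t j / q t i))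
        - ∑ i, ∑ j, H i j * (p t j * L j)
        = ∑ i, ∑ j, (H i j * (p t j * (L i - L j + 1)) - H i j * (p t i * q t j / q t i)) := by
      rw [← Finset.sum_sub_distrib]
      congr 1; funext i
      rw [← Finset.sum_sub_distrib]
      congr 1; funext j
      ring
    linarith [this, hzero]
  rw [hsplit]
  -- each term is nonpositive
  apply Finset.sum_nonpos
  intro i _
  apply Finset.sum_nonpos
  intro j _
  by_cases hij : i = j
  · subst hij
    have : p t i * q t i / q t i = p t i := by
      rw [mul_div_assoc, div_self (hq t i).ne', mul_one]
    rw [this]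
    have : L i - L i + 1 = 1 := by ring
    rw [this, mul_one]
    simp
  · have hH := hoff i j hij
    have hbr : p t j * (L i - L j + 1) - p t i * q t j / q t i ≤ 0 := by
      have := key_bracket (p t i) (q t i) (p t j) (q t j)
        (hp t i) (hq t i) (hp t j) (hq t j)
      simpa [hLdef] using this
    have : H i j * (p t j * (L i - L j + 1)) - H i j * (p t i * q t j / q t i)
        = H i j * (p t j * (L i - L j + 1) - p t i * q t j / q t i) := by ring
    rw [this]
    exact mul_nonpos_of_nonneg_of_nonpos hH hbr
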